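/- Let T be a tree, S a resolving set of T^3, and x a vertex of T. Then at most one connected component of T − x contains no vertex of S. -/

import Mathlib

open SimpleGraph

/-- Ceiling of `n / 3` over the naturals. -/
def ceil3 (n : ℕ) : ℕ := (n + 2) / 3

/-- The cube of a graph: same vertices, `u,v` adjacent iff `1 ≤ d(u,v) ≤ 3`. -/
def cube {V : Type*} (G : SimpleGraph V) : SimpleGraph V where
  Adj u v := u ≠ v ∧ 1 ≤ G.dist u v ∧ G.dist u v ≤ 3
  symm := ⟨fun u v ⟨h1, h2, h3⟩ =>
    ⟨h1.symm, by rwa [SimpleGraph.dist_comm], by rwa [SimpleGraph.dist_comm]⟩⟩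
  loopless := ⟨fun u ⟨h, _⟩ => h rfl⟩

/-- `S` is a resolving set of `G`. -/
def IsResolving {V : Type*} (G : SimpleGraph V) (S : Set V) : Prop :=
  ∀ u v : V, u ≠ v → ∃ s ∈ S, G.dist s u ≠ G.dist s v

/-- The metric dimension of a graph on a finite vertex type. -/
noncomputable def metricDim {V : Type*} [Fintype V] (G : SimpleGraph V) : ℕ :=
  sInf {n | ∃ S : Finset V, S.card = n ∧ IsResolving G (S : Set V)}

section Aux

variable {V : Type*} {G : SimpleGraph V}

/-- A walk avoiding `x` gives reachability in the graph with `x` deleted. -/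
lemma walk_avoid_reachable {x : V} :
    ∀ {a b : V} (p : G.Walk a b), (∀ v ∈ p.support, v ≠ x) →
      ∀ (ha : a ≠ x) (hb : b ≠ x),
      (G.induce {v | v ≠ x}).Reachable ⟨a, ha⟩ ⟨b, hb⟩ := by
  intro a b p
  induction p with
  | nil =>
    intro _ ha hb
    exact Reachable.refl _
  | @cons a c b h q ih =>
    intro hp ha hb
    have hc : c ≠ x := hp c (by simp [SimpleGraph.Walk.support_cons])
    have hq : ∀ v ∈ q.support, v ≠ x := fun v hv =>
      hp v (by simp [SimpleGraph.Walk.support_cons, hv])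
    have hadj : (G.induce {v | v ≠ x}).Adj ⟨a, ha⟩ ⟨c, hc⟩ := by
      simpa using h
    exact hadj.reachable.trans (ih hq hc hb)

/-- If `s` and `u` are in different components of `G − x`, then
`d(s,u) = d(s,x) + d(x,u)`. -/
lemma dist_add_of_not_reachable (hconn : G.Connected) {x s u : V}
    (hs : s ≠ x) (hu : u ≠ x)
    (hnr : ¬ (G.induce {v | v ≠ x}).Reachable ⟨s, hs⟩ ⟨u, hu⟩) :
    G.dist s u = G.dist s x + G.dist x u := by
  classical
  obtain ⟨p, hp⟩ := hconn.exists_walk_length_eq_dist s u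
  have hx : x ∈ p.support := by
    by_contra hxn
    exact hnr (walk_avoid_reachable p (fun v hv hvx => hxn (by rwa [hvx] at hv)) hs hu)
  have hsplit := p.take_spec hx
  have hlen : (p.takeUntil x hx).length + (p.dropUntil x hx).length = p.length := by
    conv_rhs => rw [← hsplit]
    rw [SimpleGraph.Walk.length_append]
  have h1 : G.dist s x ≤ (p.takeUntil x hx).length := SimpleGraph.dist_le _
  have h2 : G.dist x u ≤ (p.dropUntil x hx).length := SimpleGraph.dist_le _
  have h3 : G.dist s u ≤ G.dist s x + G.dist x u := hconn.dist_triangle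
  omega

lemma cube_adj_of_dist {a b : V} (hne : a ≠ b) (h1 : 1 ≤ G.dist a b)
    (h3 : G.dist a b ≤ 3) : (cube G).Adj a b := ⟨hne, h1, h3⟩

lemma adj_cube_of_adj {a b : V} (h : G.Adj a b) : (cube G).Adj a b := by
  refine ⟨h.ne, ?_, ?_⟩
  · exact h.reachable.pos_dist_of_ne h.ne
  · exact le_trans (SimpleGraph.dist_le h.toWalk) (by norm_num)

lemma cube_connected (hconn : G.Connected) : (cube G).Connected := by
  haveI : Nonempty V := hconn.nonempty
  constructor
  intro a b
  obtain ⟨p⟩ := hconn a b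
  induction p with
  | nil => exact Reachable.refl _
  | cons h q ih => exact (adj_cube_of_adj h).reachable.trans ih

/-- Each cube-walk step covers at most 3 in `G`. -/
lemma dist_le_three_mul (hconn : G.Connected) :
    ∀ {a b : V} (p : (cube G).Walk a b), G.dist a b ≤ 3 * p.length := by
  intro a b p
  induction p with
  | nil => simp
  | @cons a c b h q ih =>
    have h1 : G.dist a b ≤ G.dist a c + G.dist c b := hconn.dist_triangle
    have h2 : G.dist a c ≤ 3 := h.2.2
    simp only [SimpleGraph.Walk.length_cons]
    omega

lemma cube_dist_le (hconn : G.Connected) :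
    ∀ (n : ℕ) (a b : V), G.dist a b = n → (cube G).dist a b ≤ ceil3 n := by
  intro n
  induction n using Nat.strong_induction_on with
  | _ n ih =>
    intro a b hd
    by_cases hab : a = b
    · subst hab
      simp [SimpleGraph.dist_self] at hd
      simp [← hd, SimpleGraph.dist_self]
    have hn1 : 1 ≤ n := hd ▸ hconn.pos_dist_of_ne hab
    by_cases h3 : n ≤ 3
    · have hadj : (cube G).Adj a b := ⟨hab, by omega, by omega⟩
      have := SimpleGraph.dist_le hadj.toWalk
      simp only [SimpleGraph.Walk.length_cons, SimpleGraph.Walk.length_nil] at this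
      have : (cube G).dist a b ≤ 1 := this
      have hc : 1 ≤ ceil3 n := by unfold ceil3; omega
      omega
    · push_neg at h3
      obtain ⟨p, hp⟩ := hconn.exists_walk_length_eq_dist a b
      rw [hd] at hp
      -- peel off three edges
      cases p with
      | nil => simp at hp; omega
      | cons h1 q1 =>
        cases q1 with
        | nil => simp at hp; omega
        | cons h2 q2 =>
          cases q2 with
          | nil => simp at hp; omega
          | @cons _ c _ h3' q =>
            simp only [SimpleGraph.Walk.length_cons] at hp
            have hqlen : q.length = n - 3 := by omega
            have hdac : G.dist a c ≤ 3 := by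
              have := SimpleGraph.dist_le
                (SimpleGraph.Walk.cons h1 (SimpleGraph.Walk.cons h2 h3'.toWalk))
              simpa using this
            have hdcb : G.dist c b ≤ n - 3 := hqlen ▸ SimpleGraph.dist_le q
            have hac : a ≠ c := by
              intro h; subst h
              omega
            have hadj : (cube G).Adj a c :=
              ⟨hac, hconn.pos_dist_of_ne hac, hdac⟩
            have hm : G.dist c b < n := by omega
            have hrec : (cube G).dist c b ≤ ceil3 (G.dist c b) :=
              ih (G.dist c b) hm c b rfl
            have hmono : ceil3 (G.dist c b) ≤ ceil3 (n - 3) := by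
              unfold ceil3; omega
            have htri : (cube G).dist a b ≤ (cube G).dist a c + (cube G).dist c b :=
              (cube_connected hconn).dist_triangle
            have h1c : (cube G).dist a c ≤ 1 := by
              have := SimpleGraph.dist_le hadj.toWalk
              simpa using this
            have : ceil3 (n - 3) + 1 = ceil3 n := by unfold ceil3; omega
            omega

lemma cube_dist_eq (hconn : G.Connected) (a b : V) :
    (cube G).dist a b = ceil3 (G.dist a b) := by
  refine le_antisymm (cube_dist_le hconn _ a b rfl) ?_
  obtain ⟨p, hp⟩ := (cube_connected hconn).exists_walk_length_eq_dist a b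
  have := dist_le_three_mul hconn p
  rw [hp] at this
  unfold ceil3
  omega

/-- Every component of `G − x` contains a neighbor of `x` (when `G` is connected). -/
lemma exists_neighbor_in_component (hconn : G.Connected) :
    ∀ {w x : V} (p : G.Walk w x), ∀ (hw : w ≠ x),
      ∃ u, ∃ hu : u ≠ x, G.Adj x u ∧
        (G.induce {v | v ≠ x}).Reachable ⟨w, hw⟩ ⟨u, hu⟩ := by
  intro w x p
  induction p with
  | nil => intro hw; exact absurd rfl hw
  | @cons w c x h q ih =>
    intro hw
    by_cases hc : c = x
    · subst hc
      exact ⟨w, hw, h.symm, Reachable.refl _⟩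
    · obtain ⟨u, hu, hadj, hr⟩ := ih hc
      have hwc : (G.induce {v | v ≠ x}).Adj ⟨w, hw⟩ ⟨c, hc⟩ := by simpa using h
      exact ⟨u, hu, hadj, hwc.reachable.trans hr⟩

end Aux

/-- If S resolves the cube of a tree T, then at most one connected component of
T − x contains no vertex of S. -/
theorem at_most_one_component_misses_resolving_set {V : Type*} (G : SimpleGraph V)
    (hT : G.IsTree) (S : Set V) (hS : IsResolving (cube G) S) (x : V) :
    {C : (G.induce {v | v ≠ x}).ConnectedComponent |
      ∀ v, v ∈ C.supp → (v : V) ∉ S}.Subsingleton := by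
  have hconn : G.Connected := hT.isConnected
  intro C₁ hC₁ C₂ hC₂
  by_contra hne
  -- pick representatives
  obtain ⟨u₀, hu₀⟩ := C₁.exists_rep
  obtain ⟨v₀, hv₀⟩ := C₂.exists_rep
  -- find neighbors of x in each component
  obtain ⟨p₁⟩ := hconn (u₀ : V) x
  obtain ⟨u, hu, hadju, hru⟩ := exists_neighbor_in_component hconn p₁ u₀.2
  obtain ⟨p₂⟩ := hconn (v₀ : V) x
  obtain ⟨v, hv, hadjv, hrv⟩ := exists_neighbor_in_component hconn p₂ v₀.2
  have hmku : (G.induce {v | v ≠ x}).connectedComponentMk ⟨u, hu⟩ = C₁ :=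
    (SimpleGraph.ConnectedComponent.sound hru.symm).trans hu₀
  have hmkv : (G.induce {v | v ≠ x}).connectedComponentMk ⟨v, hv⟩ = C₂ :=
    (SimpleGraph.ConnectedComponent.sound hrv.symm).trans hv₀
  have huv : u ≠ v := by
    intro h
    apply hne
    rw [← hmku, ← hmkv]
    congr 1
    exact Subtype.ext h
  obtain ⟨s, hsS, hsd⟩ := hS u v huv
  apply hsd
  -- distances from s to u and v in G are equal
  have hdxu : G.dist x u = 1 := by
    refine le_antisymm ?_ (hconn.pos_dist_of_ne (Ne.symm hu))
    simpa using SimpleGraph.dist_le hadju.toWalk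
  have hdxv : G.dist x v = 1 := by
    refine le_antisymm ?_ (hconn.pos_dist_of_ne (Ne.symm hv))
    simpa using SimpleGraph.dist_le hadjv.toWalk
  have hkey : G.dist s u = G.dist s v := by
    by_cases hsx : s = x
    · subst hsx; rw [hdxu, hdxv]
    · have hnru : ¬ (G.induce {v | v ≠ x}).Reachable ⟨s, hsx⟩ ⟨u, hu⟩ := by
        intro hr
        exact hC₁ ⟨s, hsx⟩
          ((SimpleGraph.ConnectedComponent.mem_supp_iff _ _).mpr
            ((SimpleGraph.ConnectedComponent.sound hr).trans hmku)) hsS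
      have hnrv : ¬ (G.induce {v | v ≠ x}).Reachable ⟨s, hsx⟩ ⟨v, hv⟩ := by
        intro hr
        exact hC₂ ⟨s, hsx⟩
          ((SimpleGraph.ConnectedComponent.mem_supp_iff _ _).mpr
            ((SimpleGraph.ConnectedComponent.sound hr).trans hmkv)) hsS
      rw [dist_add_of_not_reachable hconn hsx hu hnru,
        dist_add_of_not_reachable hconn hsx hv hnrv, hdxu, hdxv]
  rw [cube_dist_eq hconn, cube_dist_eq hconn, hkey]
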